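/- Let E(θ,c,t) = exp(t(cos θ·q1 + sin θ·q2 + c·h))·exp(−t·c·h), with entries g₁₁, g₁₂, g₂₁, g₂₂. Then for all θ, c, t ∈ ℝ one has (g₁₁ − g₂₂)² + (g₁₂ + g₂₁)² = r(c,t)², where r(c,t) = 2·sinh(√(1−c²)·t/2)/√(1−c²) if c² < 1, r(c,t) = t if c² = 1, and r(c,t) = 2·sin(√(c²−1)·t/2)/√(c²−1) if c² > 1. -/

import Mathlib

open Matrix Real
open scoped Nat

noncomputable def q1 : Matrix (Fin 2) (Fin 2) ℝ := (1/2 : ℝ) • !![1, 0; 0, -1]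
noncomputable def q2 : Matrix (Fin 2) (Fin 2) ℝ := (1/2 : ℝ) • !![0, 1; 1, 0]
noncomputable def h : Matrix (Fin 2) (Fin 2) ℝ := (1/2 : ℝ) • !![0, -1; 1, 0]

lemma my_exp_of_sq (M : Matrix (Fin 2) (Fin 2) ℝ) (d : ℝ)
    (hM : M * M = d • (1 : Matrix (Fin 2) (Fin 2) ℝ)) :
    NormedSpace.exp M =
      (∑' k : ℕ, d ^ k / ((2 * k)! : ℝ)) • (1 : Matrix (Fin 2) (Fin 2) ℝ)
        + (∑' k : ℕ, d ^ k / ((2 * k + 1)! : ℝ)) • M := by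
  have heven : ∀ k : ℕ, M ^ (2 * k) = d ^ k • (1 : Matrix (Fin 2) (Fin 2) ℝ) := by
    intro k
    induction k with
    | zero => simp
    | succ n ih =>
        have h2 : 2 * (n + 1) = 2 * n + 2 := by ring
        rw [h2, pow_add, ih, sq, hM]
        rw [smul_mul_assoc, one_mul, smul_smul, ← pow_succ]
  have hodd : ∀ k : ℕ, M ^ (2 * k + 1) = d ^ k • M := by
    intro k
    rw [pow_succ, heven, smul_mul_assoc, one_mul]
  have hs1 : Summable (fun k : ℕ => d ^ k / ((2 * k)! : ℝ)) := by
    apply Summable.of_norm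
    apply Summable.of_nonneg_of_le (fun k => norm_nonneg _) (fun k => ?_)
      (Real.summable_pow_div_factorial |d|)
    rw [norm_div, norm_pow, Real.norm_eq_abs, Real.norm_natCast]
    gcongr
    omega
  have hs2 : Summable (fun k : ℕ => d ^ k / ((2 * k + 1)! : ℝ)) := by
    apply Summable.of_norm
    apply Summable.of_nonneg_of_le (fun k => norm_nonneg _) (fun k => ?_)
      (Real.summable_pow_div_factorial |d|)
    rw [norm_div, norm_pow, Real.norm_eq_abs, Real.norm_natCast]
    gcongr
    omega
  rw [NormedSpace.exp_eq_tsum (𝕂 := ℝ)]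
  refine (HasSum.even_add_odd ?_ ?_).tsum_eq
  · have := hs1.hasSum.smul_const (1 : Matrix (Fin 2) (Fin 2) ℝ)
    convert this using 2 with k
    · rfl
    rw [heven, smul_smul, div_eq_mul_inv, mul_comm]
  · have := hs2.hasSum.smul_const M
    convert this using 2 with k
    · rfl
    rw [hodd, smul_smul, div_eq_mul_inv, mul_comm]

lemma my_tsum_sinh (x : ℝ) :
    x * ∑' k : ℕ, (x ^ 2) ^ k / ((2 * k + 1)! : ℝ) = Real.sinh x := by
  rw [Real.sinh_eq_tsum, ← tsum_mul_left]
  congr 1 with k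
  rw [← pow_mul, pow_succ]
  ring

lemma my_tsum_sin (x : ℝ) :
    x * ∑' k : ℕ, (-(x ^ 2)) ^ k / ((2 * k + 1)! : ℝ) = Real.sin x := by
  rw [Real.sin_eq_tsum, ← tsum_mul_left]
  congr 1 with k
  rw [neg_pow, ← pow_mul, pow_succ]
  ring

lemma my_tsum_cos (x : ℝ) :
    ∑' k : ℕ, (-(x ^ 2)) ^ k / ((2 * k)! : ℝ) = Real.cos x := by
  rw [Real.cos_eq_tsum]
  congr 1 with k
  rw [neg_pow, ← pow_mul]

lemma my_tsum_one : ∑' k : ℕ, (0 : ℝ) ^ k / ((2 * k + 1)! : ℝ) = 1 := by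
  have h0 := tsum_eq_single (L := SummationFilter.unconditional ℕ) (f := fun k : ℕ => (0 : ℝ) ^ k / ((2 * k + 1)! : ℝ)) 0
    (fun k hk => by simp [zero_pow hk])
  rw [h0]
  norm_num

/-- The sub-Riemannian exponential map on `SL(2)`. -/
noncomputable def E (θ c t : ℝ) : Matrix (Fin 2) (Fin 2) ℝ :=
  NormedSpace.exp (t • (Real.cos θ • q1 + Real.sin θ • q2 + c • h))
    * NormedSpace.exp ((-(t * c)) • h)

/-- The invariant `r(c,t)` of the geodesics of `SL(2)`. -/
noncomputable def r (c t : ℝ) : ℝ :=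
  if c ^ 2 < 1 then 2 * Real.sinh (Real.sqrt (1 - c ^ 2) * t / 2) / Real.sqrt (1 - c ^ 2)
  else if c ^ 2 = 1 then t
  else 2 * Real.sin (Real.sqrt (c ^ 2 - 1) * t / 2) / Real.sqrt (c ^ 2 - 1)

/-- For the geodesics of `SL(2)`, `(g₁₁ - g₂₂)² + (g₁₂ + g₂₁)² = r(c,t)²`. -/
theorem sl2_r_invariant (θ c t : ℝ) :
    (E θ c t 0 0 - E θ c t 1 1) ^ 2 + (E θ c t 0 1 + E θ c t 1 0) ^ 2 = r c t ^ 2 := by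
  have hMdef : t • (Real.cos θ • q1 + Real.sin θ • q2 + c • h)
      = !![t * Real.cos θ / 2, t * (Real.sin θ - c) / 2;
           t * (Real.sin θ + c) / 2, -(t * Real.cos θ / 2)] := by
    simp only [q1, q2, h]
    ext i j
    fin_cases i <;> fin_cases j <;> simp <;> ring
  have hNdef : (-(t * c)) • h = !![0, t * c / 2; -(t * c / 2), 0] := by
    simp only [h]
    ext i j
    fin_cases i <;> fin_cases j <;> simp <;> ring
  have hMsq : (!![t * Real.cos θ / 2, t * (Real.sin θ - c) / 2;
           t * (Real.sin θ + c) / 2, -(t * Real.cos θ / 2)] : Matrix (Fin 2) (Fin 2) ℝ)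
        * !![t * Real.cos θ / 2, t * (Real.sin θ - c) / 2;
           t * (Real.sin θ + c) / 2, -(t * Real.cos θ / 2)]
      = (t ^ 2 * (1 - c ^ 2) / 4) • (1 : Matrix (Fin 2) (Fin 2) ℝ) := by
    have hc := Real.sin_sq_add_cos_sq θ
    ext i j
    fin_cases i <;> fin_cases j <;>
      simp [Matrix.mul_apply, Fin.sum_univ_two, Matrix.one_apply] <;>
      nlinarith [hc]
  have hNsq : (!![0, t * c / 2; -(t * c / 2), 0] : Matrix (Fin 2) (Fin 2) ℝ)
        * !![0, t * c / 2; -(t * c / 2), 0]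
      = (-((t * c / 2) ^ 2)) • (1 : Matrix (Fin 2) (Fin 2) ℝ) := by
    ext i j
    fin_cases i <;> fin_cases j <;>
      simp [Matrix.mul_apply, Fin.sum_univ_two, Matrix.one_apply] <;> ring
  have e1 := my_exp_of_sq _ _ hMsq
  have e2 := my_exp_of_sq _ _ hNsq
  have hE : E θ c t
      = ((∑' k : ℕ, (t ^ 2 * (1 - c ^ 2) / 4) ^ k / ((2 * k)! : ℝ)) • 1
          + (∑' k : ℕ, (t ^ 2 * (1 - c ^ 2) / 4) ^ k / ((2 * k + 1)! : ℝ)) •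
            !![t * Real.cos θ / 2, t * (Real.sin θ - c) / 2;
               t * (Real.sin θ + c) / 2, -(t * Real.cos θ / 2)])
        * ((∑' k : ℕ, (-((t * c / 2) ^ 2)) ^ k / ((2 * k)! : ℝ)) • 1
          + (∑' k : ℕ, (-((t * c / 2) ^ 2)) ^ k / ((2 * k + 1)! : ℝ)) •
            !![0, t * c / 2; -(t * c / 2), 0]) := by
    unfold E
    rw [hMdef, hNdef, e1, e2]
  rw [hE]
  set B := ∑' k : ℕ, (t ^ 2 * (1 - c ^ 2) / 4) ^ k / ((2 * k + 1)! : ℝ) with hBdef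
  set P := ∑' k : ℕ, (-((t * c / 2) ^ 2)) ^ k / ((2 * k)! : ℝ) with hPdef
  set Q := ∑' k : ℕ, (-((t * c / 2) ^ 2)) ^ k / ((2 * k + 1)! : ℝ) with hQdef
  set A := ∑' k : ℕ, (t ^ 2 * (1 - c ^ 2) / 4) ^ k / ((2 * k)! : ℝ) with hAdef
  have hP : P = Real.cos (t * c / 2) := hPdef.trans (my_tsum_cos (t * c / 2))
  have hQ : (t * c / 2) * Q = Real.sin (t * c / 2) := by rw [hQdef]; exact my_tsum_sin _
  simp [Matrix.mul_apply, Fin.sum_univ_two, Matrix.one_apply]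
  have h1 := Real.sin_sq_add_cos_sq θ
  have h4 := Real.sin_sq_add_cos_sq (t * c / 2)
  have hr : t ^ 2 * B ^ 2 = r c t ^ 2 := by
    rcases lt_trichotomy (c ^ 2) 1 with hc | hc | hc
    · rw [r, if_pos hc]
      set u := Real.sqrt (1 - c ^ 2) with hu
      have hu2 : u ^ 2 = 1 - c ^ 2 := Real.sq_sqrt (by linarith)
      have hu0 : u ≠ 0 := ne_of_gt (Real.sqrt_pos.mpr (by linarith))
      have hB : (u * t / 2) * B = Real.sinh (u * t / 2) := by
        rw [hBdef]
        have hd : t ^ 2 * (1 - c ^ 2) / 4 = (u * t / 2) ^ 2 := by rw [← hu2]; ring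
        simp only [hd]
        exact my_tsum_sinh _
      have hB2 := congrArg (· ^ 2) hB
      field_simp
      rw [mul_comm t u]
      linear_combination 4 * hB2
    · rw [r, if_neg (by rw [hc]; exact lt_irrefl 1), if_pos hc]
      have hB : B = 1 := by
        rw [hBdef, show t ^ 2 * (1 - c ^ 2) / 4 = (0 : ℝ) by rw [hc]; ring]
        exact my_tsum_one
      rw [hB]; ring
    · rw [r, if_neg (by linarith), if_neg (by linarith)]
      set u := Real.sqrt (c ^ 2 - 1) with hu
      have hu2 : u ^ 2 = c ^ 2 - 1 := Real.sq_sqrt (by linarith)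
      have hu0 : u ≠ 0 := ne_of_gt (Real.sqrt_pos.mpr (by linarith))
      have hB : (u * t / 2) * B = Real.sin (u * t / 2) := by
        rw [hBdef]
        have hd : t ^ 2 * (1 - c ^ 2) / 4 = -((u * t / 2) ^ 2) := by
          linear_combination (t ^ 2 / 4) * hu2
        simp only [hd]
        exact my_tsum_sin _
      have hB2 := congrArg (· ^ 2) hB
      field_simp
      rw [mul_comm t u]
      linear_combination 4 * hB2
  rw [← hr]
  linear_combination (t ^ 2 * B ^ 2 * (P ^ 2 + (t * c / 2) ^ 2 * Q ^ 2)) * h1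
    + (t ^ 2 * B ^ 2 * (P + Real.cos (t * c / 2))) * hP
    + (t ^ 2 * B ^ 2 * ((t * c / 2) * Q + Real.sin (t * c / 2))) * hQ
    + (t ^ 2 * B ^ 2) * h4
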